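/- arXiv:2403.01660 — 4 statements merged into one kernel-verified Lean document; each statement's English description precedes it below -/
import Mathlib

section
/- Let P = (X,Y,η,ℓ,H) be a problem and P' = (X,Y,η',ℓ,H) a problem with the same components except possibly the joint law η'. If ℓ is bounded above by ℓ_max, then the Risk distance satisfies d_R(P,P') ≤ ℓ_max · d_TV(η,η'). -/
open MeasureTheory
open scoped ENNReal NNReal

/-- `eabs a b = |a - b|` for extended nonnegative reals. -/
noncomputable def eabs (a b : ℝ≥0∞) : ℝ≥0∞ := (a - b) ⊔ (b - a)

/-- The conditions on the data `(η, ℓ, H)` of a supervised learning problem: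
`η` is a probability measure (the joint law), the loss `ℓ` is measurable, and the
predictors in `H` are measurable with finite risk. -/
def IsProblem {X Y : Type*} [MeasurableSpace X] [MeasurableSpace Y]
    (η : Measure (X × Y)) (ℓ : Y → Y → ℝ≥0) (H : Set (X → Y)) : Prop :=
  IsProbabilityMeasure η ∧ Measurable (Function.uncurry ℓ) ∧
    (∀ h ∈ H, Measurable h) ∧
    ∀ h ∈ H, ∫⁻ z, (ℓ (h z.1) z.2 : ℝ≥0∞) ∂η < ⊤

/-- The Risk distance between the problems `(η, ℓ, H)` on `X × Y` and `(η', ℓ', H')` on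
`X' × Y'`: the infimum, over couplings `γ` of `η` and `η'` and correspondences `R`
between `H` and `H'`, of the risk distortion
`sup_{(h,h') ∈ R} ∫ |ℓ(h(x),y) - ℓ'(h'(x'),y')| dγ`. -/
noncomputable def riskDist {X Y X' Y' : Type*} [MeasurableSpace X] [MeasurableSpace Y]
    [MeasurableSpace X'] [MeasurableSpace Y']
    (η : Measure (X × Y)) (ℓ : Y → Y → ℝ≥0) (H : Set (X → Y))
    (η' : Measure (X' × Y')) (ℓ' : Y' → Y' → ℝ≥0) (H' : Set (X' → Y')) : ℝ≥0∞ :=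
  ⨅ (γ : Measure ((X × Y) × (X' × Y')))
      (_ : γ.map Prod.fst = η ∧ γ.map Prod.snd = η'),
    ⨅ (R : Set ((X → Y) × (X' → Y')))
        (_ : (∀ p ∈ R, p.1 ∈ H ∧ p.2 ∈ H') ∧ (∀ h ∈ H, ∃ h' ∈ H', (h, h') ∈ R) ∧
          ∀ h' ∈ H', ∃ h ∈ H, (h, h') ∈ R),
      ⨆ p ∈ R, ∫⁻ z, eabs (ℓ (p.1 z.1.1) z.1.2) (ℓ' (p.2 z.2.1) z.2.2) ∂γ

/-- Stability under change of joint law with bounded loss: if `P = (X,Y,η,ℓ,H)` and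
`P' = (X,Y,η',ℓ,H)` share all components except possibly the joint law, and the loss
is bounded above by `ℓmax`, then `d_R(P,P') ≤ ℓmax · d_TV(η,η')`. -/
theorem riskDist_le_mul_totalVariation {X Y : Type*}
    [MeasurableSpace X] [TopologicalSpace X] [PolishSpace X] [BorelSpace X]
    [MeasurableSpace Y] [TopologicalSpace Y] [PolishSpace Y] [BorelSpace Y]
    (η η' : Measure (X × Y)) (ℓ : Y → Y → ℝ≥0) (H : Set (X → Y))
    (hP : IsProblem η ℓ H) (hP' : IsProblem η' ℓ H)
    (ℓmax : ℝ≥0) (hbound : ∀ y y', ℓ y y' ≤ ℓmax) :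
    riskDist η ℓ H η' ℓ H ≤
      (ℓmax : ℝ≥0∞) *
        ⨆ (B : Set (X × Y)) (_ : MeasurableSet B), eabs (η B) (η' B) := by
  classical
  obtain ⟨hη, hℓmeas, hHmeas, -⟩ := hP
  obtain ⟨hη', -, -, -⟩ := hP'
  -- the diagonal map
  set dg : (X × Y) → (X × Y) × (X × Y) := fun z => (z, z) with hdg
  have hdgm : Measurable dg := measurable_id.prodMk measurable_id
  -- measurability of the integrand
  have hFmeas : ∀ h : X → Y, Measurable h →
      Measurable (fun z : (X × Y) × (X × Y) =>
        eabs (ℓ (h z.1.1) z.1.2 : ℝ≥0∞) (ℓ (h z.2.1) z.2.2 : ℝ≥0∞)) := by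
    intro h hh
    have h1 : Measurable (fun z : (X × Y) × (X × Y) => (ℓ (h z.1.1) z.1.2 : ℝ≥0∞)) :=
      measurable_coe_nnreal_ennreal.comp (hℓmeas.comp
        ((hh.comp measurable_fst.fst).prodMk measurable_fst.snd))
    have h2 : Measurable (fun z : (X × Y) × (X × Y) => (ℓ (h z.2.1) z.2.2 : ℝ≥0∞)) :=
      measurable_coe_nnreal_ennreal.comp (hℓmeas.comp
        ((hh.comp measurable_snd.fst).prodMk measurable_snd.snd))
    exact (h1.sub h2).sup (h2.sub h1)
  -- integrals of the integrand against diagonal pushforwards vanish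
  have hdiag0 : ∀ (ν : Measure (X × Y)) (h : X → Y), Measurable h →
      ∫⁻ z, eabs (ℓ (h z.1.1) z.1.2 : ℝ≥0∞) (ℓ (h z.2.1) z.2.2 : ℝ≥0∞) ∂(ν.map dg) = 0 := by
    intro ν h hh
    rw [lintegral_map (hFmeas h hh) hdgm]
    simp [eabs, hdg]
  -- the diagonal correspondence
  set R : Set ((X → Y) × (X → Y)) := {p | p.1 ∈ H ∧ p.1 = p.2} with hR
  have hRcond : (∀ p ∈ R, p.1 ∈ H ∧ p.2 ∈ H) ∧ (∀ h ∈ H, ∃ h' ∈ H, (h, h') ∈ R) ∧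
      ∀ h' ∈ H, ∃ h ∈ H, (h, h') ∈ R := by
    refine ⟨fun p hp => ⟨hp.1, hp.2 ▸ hp.1⟩, fun h hh => ⟨h, hh, hh, rfl⟩,
      fun h hh => ⟨h, hh, hh, rfl⟩⟩
  -- set up the Lebesgue decomposition data
  set ξ : Measure (X × Y) := η + η' with hξ
  have hac : η ≪ ξ := Measure.absolutelyContinuous_of_le (Measure.le_add_right le_rfl)
  have hac' : η' ≪ ξ := Measure.absolutelyContinuous_of_le (Measure.le_add_left le_rfl)
  set f : X × Y → ℝ≥0∞ := η.rnDeriv ξ with hfdef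
  set g : X × Y → ℝ≥0∞ := η'.rnDeriv ξ with hgdef
  have hf : Measurable f := Measure.measurable_rnDeriv _ _
  have hg : Measurable g := Measure.measurable_rnDeriv _ _
  have hηf : ξ.withDensity f = η := Measure.withDensity_rnDeriv_eq _ _ hac
  have hηg : ξ.withDensity g = η' := Measure.withDensity_rnDeriv_eq _ _ hac'
  set μ : Measure (X × Y) := ξ.withDensity (f ⊓ g) with hμdef
  set ρ : Measure (X × Y) := ξ.withDensity (f - f ⊓ g) with hρdef
  set ρ' : Measure (X × Y) := ξ.withDensity (g - f ⊓ g) with hρ'def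
  have hinfm : Measurable (f ⊓ g) := hf.inf hg
  have hμρ : μ + ρ = η := by
    rw [hμdef, hρdef, ← withDensity_add_left hinfm, ← hηf]
    congr 1
    funext z
    exact add_tsub_cancel_of_le (inf_le_left : (f ⊓ g) z ≤ f z)
  have hμρ' : μ + ρ' = η' := by
    rw [hμdef, hρ'def, ← withDensity_add_left hinfm, ← hηg]
    congr 1
    funext z
    exact add_tsub_cancel_of_le (inf_le_right : (f ⊓ g) z ≤ g z)
  set c : ℝ≥0∞ := ρ Set.univ with hc
  have hμfin : μ Set.univ ≠ ⊤ := by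
    have : μ Set.univ ≤ η Set.univ := by
      rw [← hμρ]; exact le_self_add
    simp only [measure_univ] at this
    exact (this.trans_lt ENNReal.one_lt_top).ne
  have hρ'univ : ρ' Set.univ = c := by
    have h1 : μ Set.univ + ρ Set.univ = 1 := by
      rw [← Measure.add_apply, hμρ, measure_univ]
    have h2 : μ Set.univ + ρ' Set.univ = 1 := by
      rw [← Measure.add_apply, hμρ', measure_univ]
    exact (ENNReal.add_right_inj hμfin).mp (h2.trans h1.symm)
  have hc1 : c ≤ 1 := by
    have : μ Set.univ + ρ Set.univ = 1 := by
      rw [← Measure.add_apply, hμρ, measure_univ]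
    rw [hc, ← this]; exact le_add_self
  have hcfin : c ≠ ⊤ := (hc1.trans_lt ENNReal.one_lt_top).ne
  -- the total variation is at least c
  have hTV : c ≤ ⨆ (B : Set (X × Y)) (_ : MeasurableSet B), eabs (η B) (η' B) := by
    set S : Set (X × Y) := {z | g z < f z} with hS
    have hSm : MeasurableSet S := measurableSet_lt hg hf
    have hρcompl : ρ Sᶜ = 0 := by
      rw [hρdef, withDensity_apply _ hSm.compl]
      rw [setLIntegral_congr_fun_ae hSm.compl
        (Filter.Eventually.of_forall (fun z hz => ?_)), lintegral_zero]
      have hfg : f z ≤ g z := not_lt.mp hz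
      simp [inf_eq_left.mpr hfg]
    have hcS : c = ρ S := by
      refine le_antisymm ?_ (measure_mono (Set.subset_univ _))
      calc ρ Set.univ ≤ ρ S + ρ Sᶜ := by
            rw [← Set.union_compl_self S] at *
            exact measure_union_le _ _
        _ = ρ S := by rw [hρcompl, add_zero]
    have hμS : μ S = η' S := by
      rw [hμdef, ← hηg, withDensity_apply _ hSm, withDensity_apply _ hSm]
      refine setLIntegral_congr_fun_ae hSm (Filter.Eventually.of_forall (fun z hz => ?_))
      exact inf_eq_right.mpr (le_of_lt hz)
    have hηS : η S = η' S + c := by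
      rw [← hμρ, Measure.add_apply, hμS, hcS]
    have hceq : c = η S - η' S := by
      rw [hηS, ENNReal.add_sub_cancel_left (measure_ne_top η' S)]
    have : c ≤ eabs (η S) (η' S) := by
      rw [hceq]; exact le_sup_left
    exact this.trans (le_iSup₂ (f := fun B (_ : MeasurableSet B) => eabs (η B) (η' B)) S hSm)
  -- bound on the integrand
  have hFb : ∀ (h : X → Y) (z : (X × Y) × (X × Y)),
      eabs (ℓ (h z.1.1) z.1.2 : ℝ≥0∞) (ℓ (h z.2.1) z.2.2 : ℝ≥0∞) ≤ (ℓmax : ℝ≥0∞) := by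
    intro h z
    refine sup_le (tsub_le_self.trans ?_) (tsub_le_self.trans ?_) <;>
      exact ENNReal.coe_le_coe.mpr (hbound _ _)
  -- split on c = 0
  rcases eq_or_ne c 0 with hc0 | hc0
  · -- then η = η', use the diagonal coupling
    have hρ0 : ρ = 0 := by
      rw [← Measure.measure_univ_eq_zero]; exact hc0
    have hρ'0 : ρ' = 0 := by
      rw [← Measure.measure_univ_eq_zero, hρ'univ]; exact hc0
    have hμη : μ = η := by rw [← hμρ, hρ0, add_zero]
    have hηη' : η = η' := by rw [← hμρ, ← hμρ', hρ0, hρ'0]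
    set γ : Measure ((X × Y) × (X × Y)) := η.map dg with hγ
    have hγfst : γ.map Prod.fst = η := by
      rw [hγ, Measure.map_map measurable_fst hdgm]
      exact Measure.map_id
    have hγsnd : γ.map Prod.snd = η' := by
      rw [hγ, Measure.map_map measurable_snd hdgm, ← hηη']
      exact Measure.map_id
    refine le_trans (iInf₂_le γ ⟨hγfst, hγsnd⟩) (le_trans (iInf₂_le R hRcond) ?_)
    refine le_trans (iSup₂_le fun p hp => ?_) (zero_le)
    obtain ⟨hp1, hp2⟩ := hp
    rw [← hp2, hγ, hdiag0 η p.1 (hHmeas p.1 hp1)]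
  · -- main case : maximal coupling
    haveI : IsFiniteMeasure ρ := ⟨(hcfin.lt_top)⟩
    haveI : IsFiniteMeasure ρ' := ⟨by rw [hρ'univ]; exact hcfin.lt_top⟩
    set γ : Measure ((X × Y) × (X × Y)) := μ.map dg + c⁻¹ • (ρ.prod ρ') with hγ
    have hγfst : γ.map Prod.fst = η := by
      rw [hγ, Measure.map_add _ _ measurable_fst, Measure.map_smul,
        Measure.map_map measurable_fst hdgm, Measure.map_fst_prod, hρ'univ,
        smul_smul, ENNReal.inv_mul_cancel hc0 hcfin, one_smul]
      have : (Prod.fst ∘ dg) = id := rfl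
      rw [this, Measure.map_id, hμρ]
    have hγsnd : γ.map Prod.snd = η' := by
      rw [hγ, Measure.map_add _ _ measurable_snd, Measure.map_smul,
        Measure.map_map measurable_snd hdgm, Measure.map_snd_prod, ← hc,
        smul_smul, ENNReal.inv_mul_cancel hc0 hcfin, one_smul]
      have : (Prod.snd ∘ dg) = id := rfl
      rw [this, Measure.map_id, hμρ']
    refine le_trans (iInf₂_le γ ⟨hγfst, hγsnd⟩) (le_trans (iInf₂_le R hRcond) ?_)
    refine iSup₂_le fun p hp => ?_
    obtain ⟨hp1, hp2⟩ := hp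
    rw [← hp2, hγ, lintegral_add_measure, hdiag0 μ p.1 (hHmeas p.1 hp1), zero_add,
      lintegral_smul_measure]
    have hint : ∫⁻ z, eabs (ℓ (p.1 z.1.1) z.1.2 : ℝ≥0∞) (ℓ (p.1 z.2.1) z.2.2 : ℝ≥0∞)
        ∂(ρ.prod ρ') ≤ (ℓmax : ℝ≥0∞) * (c * c) := by
      calc _ ≤ ∫⁻ _, (ℓmax : ℝ≥0∞) ∂(ρ.prod ρ') := lintegral_mono (hFb p.1)
        _ = (ℓmax : ℝ≥0∞) * (c * c) := by
            rw [lintegral_const, ← Set.univ_prod_univ, Measure.prod_prod, ← hc, hρ'univ]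
    calc c⁻¹ * ∫⁻ z, eabs (ℓ (p.1 z.1.1) z.1.2 : ℝ≥0∞) (ℓ (p.1 z.2.1) z.2.2 : ℝ≥0∞)
          ∂(ρ.prod ρ') ≤ c⁻¹ * ((ℓmax : ℝ≥0∞) * (c * c)) := mul_le_mul_right hint _
      _ = (c⁻¹ * c) * ((ℓmax : ℝ≥0∞) * c) := by ring
      _ = (ℓmax : ℝ≥0∞) * c := by rw [ENNReal.inv_mul_cancel hc0 hcfin, one_mul]
      _ ≤ _ := mul_le_mul_right hTV _
end

section
/- Let P = (X,Y,η,ℓ,H) be a problem and P' = (X,Y,η,ℓ,H') a problem differing only in its predictor set. Define the pseudometric d_{ℓ,η}(h,h') := ∫|ℓ(h(x),y) − ℓ(h'(x),y)| η(dx×dy). Then d_R(P,P') is at most the Hausdorff distance between H and H' with respect to d_{ℓ,η}, where the Hausdorff distance is expressed as inf over correspondences R ∈ C(H,H') of sup_{(h,h')∈R} d_{ℓ,η}(h,h'). -/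
open MeasureTheory
open scoped ENNReal NNReal

/-- Stability under modification of the predictor set: if `P = (X,Y,η,ℓ,H)` and
`P' = (X,Y,η,ℓ,H')` differ only in their predictor sets, then `d_R(P,P')` is at most
the Hausdorff distance between `H` and `H'` with respect to the pseudometric
`d_{ℓ,η}(h,h') = ∫ |ℓ(h(x),y) - ℓ(h'(x),y)| dη`, expressed as the infimum over
correspondences `R ∈ C(H,H')` of `sup_{(h,h')∈R} d_{ℓ,η}(h,h')`. -/
theorem riskDist_le_hausdorff_predictors {X Y : Type*}
    [MeasurableSpace X] [TopologicalSpace X] [PolishSpace X] [BorelSpace X]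
    [MeasurableSpace Y] [TopologicalSpace Y] [PolishSpace Y] [BorelSpace Y]
    (η : Measure (X × Y)) (ℓ : Y → Y → ℝ≥0) (H H' : Set (X → Y))
    (hP : IsProblem η ℓ H) (hP' : IsProblem η ℓ H') :
    riskDist η ℓ H η ℓ H' ≤
      ⨅ (R : Set ((X → Y) × (X → Y)))
          (_ : (∀ p ∈ R, p.1 ∈ H ∧ p.2 ∈ H') ∧ (∀ h ∈ H, ∃ h' ∈ H', (h, h') ∈ R) ∧
            ∀ h' ∈ H', ∃ h ∈ H, (h, h') ∈ R),
        ⨆ p ∈ R, ∫⁻ z, eabs (ℓ (p.1 z.1) z.2) (ℓ (p.2 z.1) z.2) ∂η := by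
  simp only [riskDist]
  refine le_iInf fun R => le_iInf fun hR => ?_
  have hdiag : Measurable (fun z : X × Y => (z, z)) :=
    measurable_id.prodMk measurable_id
  set γ : Measure ((X × Y) × (X × Y)) := η.map (fun z => (z, z)) with hγ
  have h1 : γ.map Prod.fst = η := by
    rw [hγ, Measure.map_map measurable_fst hdiag]; exact Measure.map_id
  have h2 : γ.map Prod.snd = η := by
    rw [hγ, Measure.map_map measurable_snd hdiag]; exact Measure.map_id
  refine iInf_le_of_le γ (iInf_le_of_le ⟨h1, h2⟩ (iInf_le_of_le R (iInf_le_of_le hR ?_)))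
  refine iSup₂_le fun p hp => ?_
  have hph := (hR.1 p hp).1
  have hph' := (hR.1 p hp).2
  have hm1 : Measurable p.1 := hP.2.2.1 p.1 hph
  have hm2 : Measurable p.2 := hP'.2.2.1 p.2 hph'
  have hℓ : Measurable (Function.uncurry ℓ) := hP.2.1
  have hf : Measurable (fun z : (X × Y) × (X × Y) =>
      eabs (ℓ (p.1 z.1.1) z.1.2) (ℓ (p.2 z.2.1) z.2.2)) := by
    have hA : Measurable (fun z : (X × Y) × (X × Y) => (ℓ (p.1 z.1.1) z.1.2 : ℝ≥0∞)) := by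
      exact (hℓ.comp ((hm1.comp (measurable_fst.comp measurable_fst)).prodMk
        (measurable_snd.comp measurable_fst))).coe_nnreal_ennreal
    have hB : Measurable (fun z : (X × Y) × (X × Y) => (ℓ (p.2 z.2.1) z.2.2 : ℝ≥0∞)) := by
      exact (hℓ.comp ((hm2.comp (measurable_fst.comp measurable_snd)).prodMk
        (measurable_snd.comp measurable_snd))).coe_nnreal_ennreal
    exact (hA.sub hB).sup (hB.sub hA)
  rw [hγ, lintegral_map hf hdiag]
  exact le_biSup (fun q : (X → Y) × (X → Y) =>
    ∫⁻ z, eabs (ℓ (q.1 z.1) z.2) (ℓ (q.2 z.1) z.2) ∂η) hp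
end

section
/- The Risk distance satisfies the triangle inequality: for problems P₁, P₂, P₃ (with Polish input/response spaces), d_R(P₁,P₃) ≤ d_R(P₁,P₂) + d_R(P₂,P₃). -/
open MeasureTheory
open scoped ENNReal NNReal

open ProbabilityTheory

lemma eabs_triangle (a b c : ℝ≥0∞) : eabs a c ≤ eabs a b + eabs b c := by
  have h1 : a - c ≤ (a - b) + (b - c) := by
    rw [tsub_le_iff_right]
    calc a ≤ (a - b) + b := le_tsub_add
    _ ≤ (a - b) + ((b - c) + c) := by gcongr; exact le_tsub_add
    _ = (a - b) + (b - c) + c := by ring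
  have h2 : c - a ≤ (b - a) + (c - b) := by
    rw [tsub_le_iff_right]
    calc c ≤ (c - b) + b := le_tsub_add
    _ ≤ (c - b) + ((b - a) + a) := by gcongr; exact le_tsub_add
    _ = (b - a) + (c - b) + a := by ring
  simp only [eabs]
  exact sup_le (h1.trans (add_le_add le_sup_left le_sup_left))
    (h2.trans (add_le_add le_sup_right le_sup_right))

lemma measurable_eabs {α : Type*} [MeasurableSpace α] {f g : α → ℝ≥0∞}
    (hf : Measurable f) (hg : Measurable g) : Measurable fun a => eabs (f a) (g a) :=
  (hf.sub hg).sup (hg.sub hf)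

lemma map_compProd_prodFst {α β γ : Type*} [MeasurableSpace α] [MeasurableSpace β]
    [MeasurableSpace γ] (μ : Measure α) [SFinite μ] (κ : Kernel α β) [IsSFiniteKernel κ]
    (κ' : Kernel α γ) [IsMarkovKernel κ'] :
    (μ ⊗ₘ (κ ×ₖ κ')).map (fun p => (p.1, p.2.1)) = μ ⊗ₘ κ := by
  have hm : Measurable fun p : α × β × γ => (p.1, p.2.1) :=
    measurable_fst.prodMk (measurable_fst.comp measurable_snd)
  ext s hs
  rw [Measure.map_apply hm hs, Measure.compProd_apply (hm hs), Measure.compProd_apply hs]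
  refine lintegral_congr fun a => ?_
  have h1 : Prod.mk a ⁻¹' ((fun p : α × β × γ => (p.1, p.2.1)) ⁻¹' s)
      = {p : β × γ | p.1 ∈ Prod.mk a ⁻¹' s} := rfl
  rw [h1, ← Kernel.fst_apply' _ _ (measurable_prodMk_left hs), Kernel.fst_prod]

lemma map_compProd_prodSnd {α β γ : Type*} [MeasurableSpace α] [MeasurableSpace β]
    [MeasurableSpace γ] (μ : Measure α) [SFinite μ] (κ : Kernel α β) [IsMarkovKernel κ]
    (κ' : Kernel α γ) [IsSFiniteKernel κ'] :
    (μ ⊗ₘ (κ ×ₖ κ')).map (fun p => (p.1, p.2.2)) = μ ⊗ₘ κ' := by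
  have hm : Measurable fun p : α × β × γ => (p.1, p.2.2) :=
    measurable_fst.prodMk (measurable_snd.comp measurable_snd)
  ext s hs
  rw [Measure.map_apply hm hs, Measure.compProd_apply (hm hs), Measure.compProd_apply hs]
  refine lintegral_congr fun a => ?_
  have h1 : Prod.mk a ⁻¹' ((fun p : α × β × γ => (p.1, p.2.2)) ⁻¹' s)
      = {p : β × γ | p.2 ∈ Prod.mk a ⁻¹' s} := rfl
  rw [h1]
  exact (Kernel.snd_apply' _ _ (measurable_prodMk_left hs)).symm.trans (by rw [Kernel.snd_prod])

/-- Key step: given a coupling/correspondence pair between `P₁` and `P₂` and one between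
`P₂` and `P₃`, gluing produces an upper bound on `riskDist P₁ P₃` by the sum of the two
risk distortions. -/
lemma riskDist_le_distortion_add {X₁ Y₁ X₂ Y₂ X₃ Y₃ : Type*}
    [MeasurableSpace X₁] [TopologicalSpace X₁] [PolishSpace X₁] [BorelSpace X₁]
    [MeasurableSpace Y₁] [TopologicalSpace Y₁] [PolishSpace Y₁] [BorelSpace Y₁]
    [MeasurableSpace X₂] [TopologicalSpace X₂] [PolishSpace X₂] [BorelSpace X₂]
    [MeasurableSpace Y₂] [TopologicalSpace Y₂] [PolishSpace Y₂] [BorelSpace Y₂]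
    [MeasurableSpace X₃] [TopologicalSpace X₃] [PolishSpace X₃] [BorelSpace X₃]
    [MeasurableSpace Y₃] [TopologicalSpace Y₃] [PolishSpace Y₃] [BorelSpace Y₃]
    (η₁ : Measure (X₁ × Y₁)) (ℓ₁ : Y₁ → Y₁ → ℝ≥0) (H₁ : Set (X₁ → Y₁))
    (η₂ : Measure (X₂ × Y₂)) (ℓ₂ : Y₂ → Y₂ → ℝ≥0) (H₂ : Set (X₂ → Y₂))
    (η₃ : Measure (X₃ × Y₃)) (ℓ₃ : Y₃ → Y₃ → ℝ≥0) (H₃ : Set (X₃ → Y₃))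
    (hη₁ : IsProbabilityMeasure η₁) (hη₂ : IsProbabilityMeasure η₂)
    (hη₃ : IsProbabilityMeasure η₃)
    (hℓ₁ : Measurable (Function.uncurry ℓ₁)) (hℓ₂ : Measurable (Function.uncurry ℓ₂))
    (hℓ₃ : Measurable (Function.uncurry ℓ₃))
    (hH₁ : ∀ h ∈ H₁, Measurable h) (hH₂ : ∀ h ∈ H₂, Measurable h)
    (hH₃ : ∀ h ∈ H₃, Measurable h)
    (γ12 : Measure ((X₁ × Y₁) × (X₂ × Y₂)))
    (hγ12 : γ12.map Prod.fst = η₁ ∧ γ12.map Prod.snd = η₂)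
    (R12 : Set ((X₁ → Y₁) × (X₂ → Y₂)))
    (hR12 : (∀ p ∈ R12, p.1 ∈ H₁ ∧ p.2 ∈ H₂) ∧ (∀ h ∈ H₁, ∃ h' ∈ H₂, (h, h') ∈ R12) ∧
      ∀ h' ∈ H₂, ∃ h ∈ H₁, (h, h') ∈ R12)
    (γ23 : Measure ((X₂ × Y₂) × (X₃ × Y₃)))
    (hγ23 : γ23.map Prod.fst = η₂ ∧ γ23.map Prod.snd = η₃)
    (R23 : Set ((X₂ → Y₂) × (X₃ → Y₃)))
    (hR23 : (∀ p ∈ R23, p.1 ∈ H₂ ∧ p.2 ∈ H₃) ∧ (∀ h ∈ H₂, ∃ h' ∈ H₃, (h, h') ∈ R23) ∧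
      ∀ h' ∈ H₃, ∃ h ∈ H₂, (h, h') ∈ R23) :
    riskDist η₁ ℓ₁ H₁ η₃ ℓ₃ H₃ ≤
      (⨆ p ∈ R12, ∫⁻ z, eabs (ℓ₁ (p.1 z.1.1) z.1.2) (ℓ₂ (p.2 z.2.1) z.2.2) ∂γ12) +
      ⨆ p ∈ R23, ∫⁻ z, eabs (ℓ₂ (p.1 z.1.1) z.1.2) (ℓ₃ (p.2 z.2.1) z.2.2) ∂γ23 := by
  haveI := hη₁; haveI := hη₂; haveI := hη₃
  haveI : IsProbabilityMeasure γ12 := by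
    constructor
    rw [← Set.preimage_univ (f := Prod.fst),
      ← Measure.map_apply measurable_fst MeasurableSet.univ, hγ12.1]
    exact measure_univ
  haveI : IsProbabilityMeasure γ23 := by
    constructor
    rw [← Set.preimage_univ (f := Prod.fst),
      ← Measure.map_apply measurable_fst MeasurableSet.univ, hγ23.1]
    exact measure_univ
  haveI : Nonempty (X₁ × Y₁) := by
    by_contra h
    have h0 := measure_univ (μ := η₁)
    rw [Set.univ_eq_empty_iff.mpr (not_nonempty_iff.mp h), measure_empty] at h0
    exact zero_ne_one h0
  haveI : Nonempty (X₃ × Y₃) := by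
    by_contra h
    have h0 := measure_univ (μ := η₃)
    rw [Set.univ_eq_empty_iff.mpr (not_nonempty_iff.mp h), measure_empty] at h0
    exact zero_ne_one h0
  set ρ₁ : Measure ((X₂ × Y₂) × (X₁ × Y₁)) := γ12.map Prod.swap with hρ₁
  haveI : IsProbabilityMeasure ρ₁ := Measure.isProbabilityMeasure_map measurable_swap.aemeasurable
  have hρ₁fst : ρ₁.fst = η₂ := by rw [hρ₁, Measure.fst_map_swap]; exact hγ12.2
  have hγ23fst : γ23.fst = η₂ := hγ23.1
  set κ₁ := ρ₁.condKernel with hκ₁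
  set κ₃ := γ23.condKernel with hκ₃
  set γ : Measure ((X₂ × Y₂) × ((X₁ × Y₁) × (X₃ × Y₃))) := η₂ ⊗ₘ (κ₁ ×ₖ κ₃) with hγdef
  have hm12 : γ.map (fun p => (p.1, p.2.1)) = ρ₁ := by
    rw [hγdef, map_compProd_prodFst, ← hρ₁fst, hκ₁]
    exact ρ₁.disintegrate ρ₁.condKernel
  have hm23 : γ.map (fun p => (p.1, p.2.2)) = γ23 := by
    rw [hγdef, map_compProd_prodSnd, ← hγ23fst, hκ₃]
    exact γ23.disintegrate γ23.condKernel
  have hmap12 : Measurable fun p : (X₂ × Y₂) × ((X₁ × Y₁) × (X₃ × Y₃)) => (p.2.1, p.1) :=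
    (measurable_fst.comp measurable_snd).prodMk measurable_fst
  have hmap12' : Measurable fun p : (X₂ × Y₂) × ((X₁ × Y₁) × (X₃ × Y₃)) => (p.1, p.2.1) :=
    measurable_fst.prodMk (measurable_fst.comp measurable_snd)
  have hmap23 : Measurable fun p : (X₂ × Y₂) × ((X₁ × Y₁) × (X₃ × Y₃)) => (p.1, p.2.2) :=
    measurable_fst.prodMk (measurable_snd.comp measurable_snd)
  have hm12' : γ.map (fun p => (p.2.1, p.1)) = γ12 := by
    have h1 : (fun p : (X₂ × Y₂) × ((X₁ × Y₁) × (X₃ × Y₃)) => (p.2.1, p.1))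
        = Prod.swap ∘ (fun p => (p.1, p.2.1)) := rfl
    rw [h1, ← Measure.map_map measurable_swap hmap12', hm12, hρ₁,
      Measure.map_map measurable_swap measurable_swap]
    simp [Prod.swap_swap_eq]
  set γ13 : Measure ((X₁ × Y₁) × (X₃ × Y₃)) := γ.map (fun p => p.2) with hγ13
  have hc1 : γ13.map Prod.fst = η₁ := by
    rw [hγ13, Measure.map_map measurable_fst measurable_snd]
    rw [show (Prod.fst ∘ (Prod.snd : (X₂ × Y₂) × ((X₁ × Y₁) × (X₃ × Y₃)) → _))
        = Prod.fst ∘ (fun p : (X₂ × Y₂) × ((X₁ × Y₁) × (X₃ × Y₃)) => (p.2.1, p.1)) from rfl]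
    rw [← Measure.map_map measurable_fst hmap12, hm12', hγ12.1]
  have hc3 : γ13.map Prod.snd = η₃ := by
    rw [hγ13, Measure.map_map measurable_snd measurable_snd]
    rw [show (Prod.snd ∘ (Prod.snd : (X₂ × Y₂) × ((X₁ × Y₁) × (X₃ × Y₃)) → _))
        = Prod.snd ∘ (fun p : (X₂ × Y₂) × ((X₁ × Y₁) × (X₃ × Y₃)) => (p.1, p.2.2)) from rfl]
    rw [← Measure.map_map measurable_snd hmap23, hm23, hγ23.2]
  set R13 : Set ((X₁ → Y₁) × (X₃ → Y₃)) :=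
    {q | ∃ h₂ ∈ H₂, (q.1, h₂) ∈ R12 ∧ (h₂, q.2) ∈ R23} with hR13def
  have hR13 : (∀ p ∈ R13, p.1 ∈ H₁ ∧ p.2 ∈ H₃) ∧ (∀ h ∈ H₁, ∃ h' ∈ H₃, (h, h') ∈ R13) ∧
      ∀ h' ∈ H₃, ∃ h ∈ H₁, (h, h') ∈ R13 := by
    refine ⟨?_, ?_, ?_⟩
    · rintro p ⟨h₂, hh₂, h12, h23⟩
      exact ⟨(hR12.1 _ h12).1, (hR23.1 _ h23).2⟩
    · intro h hh
      obtain ⟨h₂, hh₂, h12⟩ := hR12.2.1 h hh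
      obtain ⟨h₃, hh₃, h23⟩ := hR23.2.1 h₂ hh₂
      exact ⟨h₃, hh₃, h₂, hh₂, h12, h23⟩
    · intro h₃ hh₃
      obtain ⟨h₂, hh₂, h23⟩ := hR23.2.2 h₃ hh₃
      obtain ⟨h₁, hh₁, h12⟩ := hR12.2.2 h₂ hh₂
      exact ⟨h₁, hh₁, h₂, hh₂, h12, h23⟩
  have step1 : riskDist η₁ ℓ₁ H₁ η₃ ℓ₃ H₃ ≤
      ⨆ p ∈ R13, ∫⁻ z, eabs (ℓ₁ (p.1 z.1.1) z.1.2) (ℓ₃ (p.2 z.2.1) z.2.2) ∂γ13 := by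
    unfold riskDist
    exact le_trans (iInf₂_le γ13 ⟨hc1, hc3⟩) (iInf₂_le R13 hR13)
  refine step1.trans (iSup₂_le ?_)
  rintro ⟨h₁, h₃⟩ ⟨h₂, hh₂, h12, h23⟩
  have mh₁ : Measurable h₁ := hH₁ _ (hR12.1 _ h12).1
  have mh₂ : Measurable h₂ := hH₂ _ hh₂
  have mh₃ : Measurable h₃ := hH₃ _ (hR23.1 _ h23).2
  set F₁ : X₁ × Y₁ → ℝ≥0∞ := fun z => (ℓ₁ (h₁ z.1) z.2 : ℝ≥0∞) with hF₁
  set F₂ : X₂ × Y₂ → ℝ≥0∞ := fun z => (ℓ₂ (h₂ z.1) z.2 : ℝ≥0∞) with hF₂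
  set F₃ : X₃ × Y₃ → ℝ≥0∞ := fun z => (ℓ₃ (h₃ z.1) z.2 : ℝ≥0∞) with hF₃
  have mF₁ : Measurable F₁ :=
    measurable_coe_nnreal_ennreal.comp
      (hℓ₁.comp ((mh₁.comp measurable_fst).prodMk measurable_snd))
  have mF₂ : Measurable F₂ :=
    measurable_coe_nnreal_ennreal.comp
      (hℓ₂.comp ((mh₂.comp measurable_fst).prodMk measurable_snd))
  have mF₃ : Measurable F₃ :=
    measurable_coe_nnreal_ennreal.comp
      (hℓ₃.comp ((mh₃.comp measurable_fst).prodMk measurable_snd))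
  have e13 : ∫⁻ z, eabs (F₁ z.1) (F₃ z.2) ∂γ13 = ∫⁻ p, eabs (F₁ p.2.1) (F₃ p.2.2) ∂γ := by
    rw [hγ13]
    exact lintegral_map (measurable_eabs (mF₁.comp measurable_fst)
      (mF₃.comp measurable_snd)) measurable_snd
  have e12 : ∫⁻ p, eabs (F₁ p.2.1) (F₂ p.1) ∂γ = ∫⁻ z, eabs (F₁ z.1) (F₂ z.2) ∂γ12 := by
    rw [← hm12']
    exact (lintegral_map (measurable_eabs (mF₁.comp measurable_fst)
      (mF₂.comp measurable_snd)) hmap12).symm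
  have e23 : ∫⁻ p, eabs (F₂ p.1) (F₃ p.2.2) ∂γ = ∫⁻ z, eabs (F₂ z.1) (F₃ z.2) ∂γ23 := by
    rw [← hm23]
    exact (lintegral_map (measurable_eabs (mF₂.comp measurable_fst)
      (mF₃.comp measurable_snd)) hmap23).symm
  calc ∫⁻ z, eabs (F₁ z.1) (F₃ z.2) ∂γ13
      = ∫⁻ p, eabs (F₁ p.2.1) (F₃ p.2.2) ∂γ := e13
    _ ≤ ∫⁻ p, eabs (F₁ p.2.1) (F₂ p.1) + eabs (F₂ p.1) (F₃ p.2.2) ∂γ :=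
        lintegral_mono fun p => eabs_triangle _ _ _
    _ = (∫⁻ p, eabs (F₁ p.2.1) (F₂ p.1) ∂γ) + ∫⁻ p, eabs (F₂ p.1) (F₃ p.2.2) ∂γ :=
        lintegral_add_left (measurable_eabs
          (mF₁.comp (measurable_fst.comp measurable_snd)) (mF₂.comp measurable_fst)) _
    _ = (∫⁻ z, eabs (F₁ z.1) (F₂ z.2) ∂γ12) + ∫⁻ z, eabs (F₂ z.1) (F₃ z.2) ∂γ23 := by
        rw [e12, e23]
    _ ≤ _ := add_le_add
        (le_biSup (f := fun p : (X₁ → Y₁) × (X₂ → Y₂) =>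
          ∫⁻ z, eabs (ℓ₁ (p.1 z.1.1) z.1.2) (ℓ₂ (p.2 z.2.1) z.2.2) ∂γ12) h12)
        (le_biSup (f := fun p : (X₂ → Y₂) × (X₃ → Y₃) =>
          ∫⁻ z, eabs (ℓ₂ (p.1 z.1.1) z.1.2) (ℓ₃ (p.2 z.2.1) z.2.2) ∂γ23) h23)

/-- The Risk distance satisfies the triangle inequality: for problems `P₁, P₂, P₃`
with Polish input and response spaces, `d_R(P₁,P₃) ≤ d_R(P₁,P₂) + d_R(P₂,P₃)`. -/
theorem riskDist_triangle {X₁ Y₁ X₂ Y₂ X₃ Y₃ : Type*}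
    [MeasurableSpace X₁] [TopologicalSpace X₁] [PolishSpace X₁] [BorelSpace X₁]
    [MeasurableSpace Y₁] [TopologicalSpace Y₁] [PolishSpace Y₁] [BorelSpace Y₁]
    [MeasurableSpace X₂] [TopologicalSpace X₂] [PolishSpace X₂] [BorelSpace X₂]
    [MeasurableSpace Y₂] [TopologicalSpace Y₂] [PolishSpace Y₂] [BorelSpace Y₂]
    [MeasurableSpace X₃] [TopologicalSpace X₃] [PolishSpace X₃] [BorelSpace X₃]
    [MeasurableSpace Y₃] [TopologicalSpace Y₃] [PolishSpace Y₃] [BorelSpace Y₃]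
    (η₁ : Measure (X₁ × Y₁)) (ℓ₁ : Y₁ → Y₁ → ℝ≥0) (H₁ : Set (X₁ → Y₁))
    (η₂ : Measure (X₂ × Y₂)) (ℓ₂ : Y₂ → Y₂ → ℝ≥0) (H₂ : Set (X₂ → Y₂))
    (η₃ : Measure (X₃ × Y₃)) (ℓ₃ : Y₃ → Y₃ → ℝ≥0) (H₃ : Set (X₃ → Y₃))
    (hP₁ : IsProblem η₁ ℓ₁ H₁) (hP₂ : IsProblem η₂ ℓ₂ H₂) (hP₃ : IsProblem η₃ ℓ₃ H₃) :
    riskDist η₁ ℓ₁ H₁ η₃ ℓ₃ H₃ ≤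
      riskDist η₁ ℓ₁ H₁ η₂ ℓ₂ H₂ + riskDist η₂ ℓ₂ H₂ η₃ ℓ₃ H₃ := by
  obtain ⟨hη₁, hℓ₁, hH₁, -⟩ := hP₁
  obtain ⟨hη₂, hℓ₂, hH₂, -⟩ := hP₂
  obtain ⟨hη₃, hℓ₃, hH₃, -⟩ := hP₃
  by_cases h12 : riskDist η₁ ℓ₁ H₁ η₂ ℓ₂ H₂ = ⊤
  · simp [h12]
  by_cases h23 : riskDist η₂ ℓ₂ H₂ η₃ ℓ₃ H₃ = ⊤
  · simp [h23]
  refine ENNReal.le_of_forall_pos_le_add fun ε hε _ => ?_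
  have hhalf : ((ε : ℝ≥0∞) / 2) ≠ 0 :=
    (ENNReal.div_pos (by exact_mod_cast hε.ne') (by norm_num)).ne'
  have h1 : riskDist η₁ ℓ₁ H₁ η₂ ℓ₂ H₂ < riskDist η₁ ℓ₁ H₁ η₂ ℓ₂ H₂ + ε / 2 :=
    ENNReal.lt_add_right h12 hhalf
  have h2 : riskDist η₂ ℓ₂ H₂ η₃ ℓ₃ H₃ < riskDist η₂ ℓ₂ H₂ η₃ ℓ₃ H₃ + ε / 2 :=
    ENNReal.lt_add_right h23 hhalf
  conv_lhs at h1 => rw [riskDist]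
  conv_lhs at h2 => rw [riskDist]
  simp only [iInf_lt_iff] at h1 h2
  obtain ⟨γ12, hγ12, R12, hR12, hS12⟩ := h1
  obtain ⟨γ23, hγ23, R23, hR23, hS23⟩ := h2
  calc riskDist η₁ ℓ₁ H₁ η₃ ℓ₃ H₃
      ≤ (⨆ p ∈ R12, ∫⁻ z, eabs (ℓ₁ (p.1 z.1.1) z.1.2) (ℓ₂ (p.2 z.2.1) z.2.2) ∂γ12) +
        ⨆ p ∈ R23, ∫⁻ z, eabs (ℓ₂ (p.1 z.1.1) z.1.2) (ℓ₃ (p.2 z.2.1) z.2.2) ∂γ23 :=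
        riskDist_le_distortion_add η₁ ℓ₁ H₁ η₂ ℓ₂ H₂ η₃ ℓ₃ H₃ hη₁ hη₂ hη₃ hℓ₁ hℓ₂ hℓ₃
          hH₁ hH₂ hH₃ γ12 hγ12 R12 hR12 γ23 hγ23 R23 hR23
    _ ≤ (riskDist η₁ ℓ₁ H₁ η₂ ℓ₂ H₂ + ε / 2) + (riskDist η₂ ℓ₂ H₂ η₃ ℓ₃ H₃ + ε / 2) :=
        add_le_add hS12.le hS23.le
    _ = riskDist η₁ ℓ₁ H₁ η₂ ℓ₂ H₂ + riskDist η₂ ℓ₂ H₂ η₃ ℓ₃ H₃ + ε := by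
        rw [add_add_add_comm, ENNReal.add_halves]
end

section
/- If problem P' is a simulation of problem P, then the Risk distance between them is zero: d_R(P,P') = 0. -/
open MeasureTheory
open scoped ENNReal NNReal

/-- If `P' = (X',Y',η',ℓ',H')` is a simulation of `P = (X,Y,η,ℓ,H)` (via measurable
maps `f₁ : X' → X`, `f₂ : Y' → Y` with `(f₁×f₂)_♯ η' = η` such that predictors on
both sides match losses `η'`-a.e.), then the Risk distance between them is zero. -/
theorem riskDist_eq_zero_of_simulation {X Y X' Y' : Type*}
    [MeasurableSpace X] [TopologicalSpace X] [PolishSpace X] [BorelSpace X]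
    [MeasurableSpace Y] [TopologicalSpace Y] [PolishSpace Y] [BorelSpace Y]
    [MeasurableSpace X'] [TopologicalSpace X'] [PolishSpace X'] [BorelSpace X']
    [MeasurableSpace Y'] [TopologicalSpace Y'] [PolishSpace Y'] [BorelSpace Y']
    (η : Measure (X × Y)) (ℓ : Y → Y → ℝ≥0) (H : Set (X → Y))
    (η' : Measure (X' × Y')) (ℓ' : Y' → Y' → ℝ≥0) (H' : Set (X' → Y'))
    (hP : IsProblem η ℓ H) (hP' : IsProblem η' ℓ' H')
    (f₁ : X' → X) (f₂ : Y' → Y) (hf₁ : Measurable f₁) (hf₂ : Measurable f₂)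
    (hpush : η'.map (Prod.map f₁ f₂) = η)
    (hsim₁ : ∀ h ∈ H, ∃ h' ∈ H',
      ∀ᵐ z ∂η', ℓ' (h' z.1) z.2 = ℓ (h (f₁ z.1)) (f₂ z.2))
    (hsim₂ : ∀ h' ∈ H', ∃ h ∈ H,
      ∀ᵐ z ∂η', ℓ' (h' z.1) z.2 = ℓ (h (f₁ z.1)) (f₂ z.2)) :
    riskDist η ℓ H η' ℓ' H' = 0 := by
  refine le_antisymm ?_ (zero_le)
  set g : X' × Y' → (X × Y) × (X' × Y') := fun z => (Prod.map f₁ f₂ z, z) with hg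
  have hgm : Measurable g := ((hf₁.comp measurable_fst).prodMk
    (hf₂.comp measurable_snd)).prodMk measurable_id
  set γ : Measure ((X × Y) × (X' × Y')) := η'.map g with hγ
  have hfst : γ.map Prod.fst = η := by
    rw [hγ, Measure.map_map measurable_fst hgm]
    exact hpush
  have hsnd : γ.map Prod.snd = η' := by
    rw [hγ, Measure.map_map measurable_snd hgm]
    exact Measure.map_id
  set R : Set ((X → Y) × (X' → Y')) :=
    {p | p.1 ∈ H ∧ p.2 ∈ H' ∧ ∀ᵐ z ∂η', ℓ' (p.2 z.1) z.2 = ℓ (p.1 (f₁ z.1)) (f₂ z.2)}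
    with hR
  have hRcond : (∀ p ∈ R, p.1 ∈ H ∧ p.2 ∈ H') ∧ (∀ h ∈ H, ∃ h' ∈ H', (h, h') ∈ R) ∧
      ∀ h' ∈ H', ∃ h ∈ H, (h, h') ∈ R := by
    refine ⟨fun p hp => ⟨hp.1, hp.2.1⟩, fun h hh => ?_, fun h' hh' => ?_⟩
    · obtain ⟨h', hh', hae⟩ := hsim₁ h hh
      exact ⟨h', hh', hh, hh', hae⟩
    · obtain ⟨h, hh, hae⟩ := hsim₂ h' hh'
      exact ⟨h, hh, hh, hh', hae⟩
  refine le_trans (iInf_le_of_le γ (iInf_le_of_le ⟨hfst, hsnd⟩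
    (iInf_le_of_le R (iInf_le _ hRcond)))) ?_
  refine iSup₂_le fun p hp => le_of_eq ?_
  obtain ⟨hp1, hp2, hae⟩ := hp
  have hm1 : Measurable fun z : (X × Y) × (X' × Y') => (ℓ (p.1 z.1.1) z.1.2 : ℝ≥0∞) := by
    exact (measurable_coe_nnreal_ennreal.comp (hP.2.1.comp
      (((hP.2.2.1 p.1 hp1).comp (measurable_fst.comp measurable_fst)).prodMk
        (measurable_snd.comp measurable_fst))))
  have hm2 : Measurable fun z : (X × Y) × (X' × Y') => (ℓ' (p.2 z.2.1) z.2.2 : ℝ≥0∞) := by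
    exact (measurable_coe_nnreal_ennreal.comp (hP'.2.1.comp
      (((hP'.2.2.1 p.2 hp2).comp (measurable_fst.comp measurable_snd)).prodMk
        (measurable_snd.comp measurable_snd))))
  have hmF : Measurable fun z : (X × Y) × (X' × Y') =>
      eabs (ℓ (p.1 z.1.1) z.1.2) (ℓ' (p.2 z.2.1) z.2.2) :=
    (hm1.sub hm2).sup (hm2.sub hm1)
  rw [hγ, lintegral_map hmF hgm]
  refine lintegral_eq_zero_iff' (hmF.comp hgm).aemeasurable |>.mpr ?_
  filter_upwards [hae] with z hz
  simp [g, Function.comp, Prod.map, eabs, hz, tsub_self]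
end
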